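/- arXiv:2411.01207 — 7 statements merged into one kernel-verified Lean document; each statement's English description precedes it below -/
import Mathlib

section
/- Let G be a finite simple graph with n vertices and m edges. Then ρ(G) − 2m/n ≤ √(s(G)/2), where ρ(G) is the spectral radius of G and s(G) is the degree deviation of G. -/
open Finset Matrix

/-- The adjacency matrix of a simple graph over `ℝ` is Hermitian. -/
lemma SimpleGraph.isHermitian_adjMatrix' {V : Type*} [Fintype V] (G : SimpleGraph V)
    [DecidableRel G.Adj] : (G.adjMatrix ℝ).IsHermitian := by
  rw [Matrix.IsHermitian, Matrix.conjTranspose_eq_transpose_of_trivial]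
  exact G.isSymm_adjMatrix

/-- The spectral radius of a simple graph: the largest eigenvalue of its adjacency matrix. -/
noncomputable def SimpleGraph.spectralRadius {V : Type*} [Fintype V] [DecidableEq V]
    (G : SimpleGraph V) [DecidableRel G.Adj] : ℝ :=
  ⨆ i, (G.isHermitian_adjMatrix').eigenvalues i

/-- The degree deviation of a simple graph: `s(G) = ∑_v |d(v) - 2m/n|`. -/
noncomputable def SimpleGraph.degreeDeviation {V : Type*} [Fintype V] [DecidableEq V]
    (G : SimpleGraph V) [DecidableRel G.Adj] : ℝ :=
  ∑ v, |(G.degree v : ℝ) - 2 * (G.edgeFinset.card : ℝ) / (Fintype.card V : ℝ)|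

/-- There is a nonnegative unit eigenvector for the spectral radius. -/
lemma SimpleGraph.exists_nonneg_unit_eigenvector {V : Type*} [Fintype V] [DecidableEq V]
    [Nonempty V] (G : SimpleGraph V) [DecidableRel G.Adj] :
    ∃ z : V → ℝ, (∀ v, 0 ≤ z v) ∧ (∑ v, z v ^ 2 = 1) ∧
      (G.adjMatrix ℝ) *ᵥ z = G.spectralRadius • z := by
  classical
  have hA := G.isHermitian_adjMatrix'
  obtain ⟨i₀, hi₀⟩ := Finite.exists_max hA.eigenvalues
  have hmu : G.spectralRadius = hA.eigenvalues i₀ :=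
    le_antisymm (ciSup_le hi₀) (le_ciSup (Set.Finite.bddAbove (Set.finite_range _)) i₀)
  set μ := G.spectralRadius with hμdef
  set x : V → ℝ := ⇑(hA.eigenvectorBasis i₀) with hxdef
  have hx : G.adjMatrix ℝ *ᵥ x = μ • x := by
    rw [hmu]; exact hA.mulVec_eigenvectorBasis i₀
  have hxnorm : ∑ v, x v ^ 2 = 1 := by
    have hb : ‖hA.eigenvectorBasis i₀‖ = 1 := hA.eigenvectorBasis.orthonormal.1 i₀
    rw [EuclideanSpace.norm_eq, Real.sqrt_eq_one] at hb
    simpa [Real.norm_eq_abs, sq_abs] using hb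
  set z : V → ℝ := fun v => |x v| with hzdef
  have hz0 : ∀ v, 0 ≤ z v := fun v => abs_nonneg _
  have hz2 : ∑ v, z v ^ 2 = 1 := by
    simp only [hzdef, sq_abs]; exact hxnorm
  have hzz : z ⬝ᵥ z = 1 := by
    simpa [dotProduct, ← sq] using hz2
  have hxx : x ⬝ᵥ x = 1 := by
    simpa [dotProduct, ← sq] using hxnorm
  have hray : μ ≤ z ⬝ᵥ (G.adjMatrix ℝ *ᵥ z) := by
    have h1 : x ⬝ᵥ (G.adjMatrix ℝ *ᵥ x) = μ := by
      rw [hx, dotProduct_smul, hxx]; simp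
    rw [← h1, dotProduct_mulVec_adjMatrix, dotProduct_mulVec_adjMatrix]
    refine Finset.sum_le_sum fun i _ => Finset.sum_le_sum fun j _ => ?_
    by_cases h : G.Adj i j
    · simp only [h, if_true, hzdef]
      calc x i * x j ≤ |x i * x j| := le_abs_self _
        _ = |x i| * |x j| := abs_mul _ _
    · simp [h]
  have hev : ∀ i, 0 ≤ μ - hA.eigenvalues i := fun i => sub_nonneg.2 (hmu ▸ hi₀ i)
  have hpsd : Matrix.PosSemidef (μ • (1 : Matrix V V ℝ) - G.adjMatrix ℝ) := by
    have hUU : (hA.eigenvectorUnitary : Matrix V V ℝ) *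
        (star (hA.eigenvectorUnitary : Matrix V V ℝ)) = 1 :=
      Matrix.mem_unitaryGroup_iff.mp hA.eigenvectorUnitary.2
    have hdiag : Matrix.diagonal (fun i => μ - hA.eigenvalues i) =
        μ • (1 : Matrix V V ℝ) - Matrix.diagonal (RCLike.ofReal ∘ hA.eigenvalues) := by
      rw [RCLike.ofReal_real_eq_id]
      ext i j
      rcases eq_or_ne i j with rfl | h
      · simp
      · simp [Matrix.diagonal_apply_ne _ h, Matrix.one_apply_ne h]
    have hdecomp : μ • (1 : Matrix V V ℝ) - G.adjMatrix ℝ =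
        (hA.eigenvectorUnitary : Matrix V V ℝ) *
          Matrix.diagonal (fun i => μ - hA.eigenvalues i) *
          ((hA.eigenvectorUnitary : Matrix V V ℝ))ᴴ := by
      rw [← Matrix.star_eq_conjTranspose, hdiag, Matrix.mul_sub, Matrix.sub_mul]
      rw [Matrix.mul_smul, Matrix.mul_one, Matrix.smul_mul, hUU]
      conv_lhs => rw [hA.spectral_theorem, Unitary.conjStarAlgAut_apply]
    rw [hdecomp]
    exact (Matrix.PosSemidef.diagonal (fun i => hev i)).mul_mul_conjTranspose_same _
  have hz_eigen : G.adjMatrix ℝ *ᵥ z = μ • z := by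
    have hstar : star z = z := by funext v; simp
    have h0 : star z ⬝ᵥ ((μ • (1 : Matrix V V ℝ) - G.adjMatrix ℝ) *ᵥ z) = 0 := by
      have hge := hpsd.dotProduct_mulVec_nonneg z
      have hle : z ⬝ᵥ ((μ • (1 : Matrix V V ℝ) - G.adjMatrix ℝ) *ᵥ z) ≤ 0 := by
        rw [Matrix.sub_mulVec, dotProduct_sub, Matrix.smul_mulVec,
          Matrix.one_mulVec, dotProduct_smul, hzz]
        simp only [smul_eq_mul, mul_one]
        linarith
      rw [hstar] at hge ⊢
      linarith
    have hker := (hpsd.dotProduct_mulVec_zero_iff z).mp h0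
    rw [Matrix.sub_mulVec, Matrix.smul_mulVec, Matrix.one_mulVec, sub_eq_zero] at hker
    exact hker.symm
  exact ⟨z, hz0, hz2, hz_eigen⟩

/-- For any graph `G` with `n` vertices and `m` edges,
`ρ(G) - 2m/n ≤ √(s(G)/2)`. -/
theorem spectralRadius_sub_avgDegree_le_sqrt_half_degreeDeviation
    {V : Type*} [Fintype V] [DecidableEq V] [Nonempty V]
    (G : SimpleGraph V) [DecidableRel G.Adj] :
    G.spectralRadius - 2 * (G.edgeFinset.card : ℝ) / (Fintype.card V : ℝ) ≤
      Real.sqrt (G.degreeDeviation / 2) := by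
  classical
  obtain ⟨z, hz0, hz2, hze⟩ := G.exists_nonneg_unit_eigenvector
  set μ := G.spectralRadius with hμdef
  set dbar : ℝ := 2 * (G.edgeFinset.card : ℝ) / (Fintype.card V : ℝ) with hdbardef
  have hn0 : (0 : ℝ) < (Fintype.card V : ℝ) := by
    exact_mod_cast Fintype.card_pos
  have hdbar0 : 0 ≤ dbar := by positivity
  -- row-sum identity : μ * ∑ z = ∑ d v * z v
  have hsum : μ * ∑ v, z v = ∑ v, (G.degree v : ℝ) * z v := by
    have h1 : ∑ v, (G.adjMatrix ℝ *ᵥ z) v = μ * ∑ v, z v := by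
      rw [hze]; simp [Finset.mul_sum]
    have hones : ∀ y : V → ℝ, (fun _ : V => (1:ℝ)) ⬝ᵥ y = ∑ v, y v := fun y => by
      simp only [dotProduct, one_mul]
    have h3 : ((fun _ : V => (1:ℝ)) ᵥ* G.adjMatrix ℝ) = fun u => (G.degree u : ℝ) := by
      funext u
      rw [SimpleGraph.adjMatrix_vecMul_apply, Finset.sum_const, nsmul_eq_mul, mul_one]
      norm_cast
    have h4 : (fun u => (G.degree u : ℝ)) ⬝ᵥ z = ∑ v, (G.degree v : ℝ) * z v := by
      simp only [dotProduct, one_mul]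
    rw [← h1, ← hones, Matrix.dotProduct_mulVec, h3, h4]
  have hdeg : ∑ v, (G.degree v : ℝ) = 2 * (G.edgeFinset.card : ℝ) := by
    rw [← Nat.cast_sum, G.sum_degrees_eq_twice_card_edges]
    push_cast
    ring
  have hzero : ∑ v, ((G.degree v : ℝ) - dbar) = 0 := by
    rw [Finset.sum_sub_distrib, hdeg, Finset.sum_const, Finset.card_univ, hdbardef,
      nsmul_eq_mul]
    field_simp
    ring
  have hhalf : ∑ v, max ((G.degree v : ℝ) - dbar) 0 = G.degreeDeviation / 2 := by
    have hmax : ∀ a : ℝ, max a 0 = (|a| + a) / 2 := by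
      intro a
      rcases le_or_gt 0 a with h | h
      · rw [max_eq_left h, abs_of_nonneg h]; ring
      · rw [max_eq_right h.le, abs_of_neg h]; ring
    simp_rw [hmax]
    rw [← Finset.sum_div, Finset.sum_add_distrib, hzero, add_zero,
      SimpleGraph.degreeDeviation]
  obtain ⟨w, -, hw⟩ := Finset.exists_max_image Finset.univ z ⟨Classical.arbitrary V,
    Finset.mem_univ _⟩
  have hw' : ∀ v, z v ≤ z w := fun v => hw v (Finset.mem_univ v)
  have hw0 : 0 < z w := by
    by_contra h
    push_neg at h
    have hall : ∀ v, z v = 0 := fun v => le_antisymm ((hw' v).trans h) (hz0 v)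
    have : (1:ℝ) = 0 := by
      rw [← hz2]
      apply Finset.sum_eq_zero
      intro v _
      rw [hall v]; norm_num
    norm_num at this
  have hμw : μ * z w ≤ ∑ v, z v := by
    have h1 : (G.adjMatrix ℝ *ᵥ z) w = μ * z w := by rw [hze]; simp
    rw [← h1, SimpleGraph.adjMatrix_mulVec_apply]
    apply Finset.sum_le_sum_of_subset_of_nonneg (Finset.subset_univ _)
    intro v _ _; exact hz0 v
  have hkey : (μ - dbar) * ∑ v, z v ≤ (G.degreeDeviation / 2) * z w := by
    have hid : (μ - dbar) * ∑ v, z v = ∑ v, ((G.degree v : ℝ) - dbar) * z v := by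
      rw [sub_mul, hsum, Finset.mul_sum]
      rw [← Finset.sum_sub_distrib]
      congr 1; funext v; ring
    rw [hid, ← hhalf, Finset.sum_mul]
    apply Finset.sum_le_sum
    intro v _
    rcases le_or_gt ((G.degree v : ℝ) - dbar) 0 with h | h
    · calc ((G.degree v : ℝ) - dbar) * z v ≤ 0 := mul_nonpos_of_nonpos_of_nonneg h (hz0 v)
        _ = max ((G.degree v : ℝ) - dbar) 0 * z w := by rw [max_eq_right h, zero_mul]
    · rw [max_eq_left h.le]
      exact mul_le_mul_of_nonneg_left (hw' v) h.le
  rcases le_or_gt (μ - dbar) 0 with h | h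
  · exact h.trans (Real.sqrt_nonneg _)
  · rw [Real.le_sqrt' h]
    have c1 : (μ - dbar) ^ 2 * z w ≤ (μ - dbar) * (μ * z w) := by
      have hpos : 0 ≤ (μ - dbar) * z w * dbar := mul_nonneg (mul_nonneg h.le hw0.le) hdbar0
      nlinarith [hpos]
    have c2 : (μ - dbar) * (μ * z w) ≤ (μ - dbar) * ∑ v, z v :=
      mul_le_mul_of_nonneg_left hμw h.le
    have c3 : (μ - dbar) ^ 2 * z w ≤ (G.degreeDeviation / 2) * z w :=
      le_trans (le_trans c1 c2) hkey
    exact le_of_mul_le_mul_right c3 hw0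
end

section
/- Let G be a finite simple graph with spectral radius ρ and adjacency matrix A. For any polynomial f with real coefficients, f(ρ) ≤ max_{u ∈ V(G)} r_u(f(A)), where r_u(f(A)) denotes the row sum of the matrix f(A) at the row indexed by vertex u. -/
open Finset Matrix

/-- Rayleigh quotient bound: for a real symmetric matrix, the quadratic form is bounded
by the largest eigenvalue times the squared norm. -/
lemma rayleigh_le_iSup_eigenvalues {V : Type*} [Fintype V] [DecidableEq V] [Nonempty V]
    (A : Matrix V V ℝ) (hA : A.IsHermitian) (z : V → ℝ) :
    z ⬝ᵥ (A *ᵥ z) ≤ (⨆ i, hA.eigenvalues i) * (z ⬝ᵥ z) := by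
  set U : Matrix V V ℝ := (hA.eigenvectorUnitary : Matrix V V ℝ) with hU
  set c : V → ℝ := Uᵀ *ᵥ z with hc
  have hstar : star U = Uᵀ := Matrix.conjTranspose_eq_transpose_of_trivial U
  have h1 : z ⬝ᵥ (A *ᵥ z) = ∑ i, hA.eigenvalues i * (c i * c i) := by
    conv_lhs => rw [hA.spectral_theorem, Unitary.conjStarAlgAut_apply]
    rw [← Matrix.mulVec_mulVec, ← Matrix.mulVec_mulVec, hstar,
      dotProduct_mulVec, ← Matrix.mulVec_transpose]
    simp only [hc, Matrix.mulVec_diagonal, dotProduct, RCLike.ofReal_real_eq_id,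
      Function.comp_apply, id]
    exact Finset.sum_congr rfl fun i _ => by ring
  have h2 : z ⬝ᵥ z = ∑ i, c i * c i := by
    have : c ⬝ᵥ c = z ⬝ᵥ z := by
      rw [hc, dotProduct_mulVec, Matrix.vecMul_transpose, Matrix.mulVec_mulVec,
        ← hstar, Matrix.mem_unitaryGroup_iff.mp hA.eigenvectorUnitary.2, Matrix.one_mulVec]
    rw [← this]; rfl
  rw [h1, h2, Finset.mul_sum]
  refine Finset.sum_le_sum fun i _ => ?_
  exact mul_le_mul_of_nonneg_right
    (le_ciSup (Set.Finite.bddAbove (Set.finite_range _)) i) (mul_self_nonneg _)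

/-- For any polynomial `f`, `f(ρ(G))` is at most the maximum row sum of `f(A(G))`. -/
theorem polynomial_eval_spectralRadius_le_max_rowSum
    {V : Type*} [Fintype V] [DecidableEq V] [Nonempty V]
    (G : SimpleGraph V) [DecidableRel G.Adj] (f : Polynomial ℝ) :
    f.eval G.spectralRadius ≤
      Finset.univ.sup' Finset.univ_nonempty
        (fun u => ∑ v, (Polynomial.aeval (G.adjMatrix ℝ) f) u v) := by
  classical
  set A : Matrix V V ℝ := G.adjMatrix ℝ with hAdef
  have hA : A.IsHermitian := G.isHermitian_adjMatrix'
  set ρ : ℝ := G.spectralRadius with hρdef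
  have hρ : ρ = ⨆ i, hA.eigenvalues i := rfl
  have hAnn : ∀ u v, 0 ≤ A u v := fun u v => by
    simp only [hAdef, SimpleGraph.adjMatrix_apply]
    positivity
  have hAT : Aᵀ = A := G.isSymm_adjMatrix
  -- a nonnegative eigenvector for ρ
  obtain ⟨i₀, hi₀⟩ := exists_eq_ciSup_of_finite (f := hA.eigenvalues)
  set y : V → ℝ := ⇑(hA.eigenvectorBasis i₀) with hy
  have hAy : A *ᵥ y = ρ • y := by
    rw [hy, hA.mulVec_eigenvectorBasis, hi₀, hρ]
  have hy0 : y ≠ 0 := by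
    intro h
    exact hA.eigenvectorBasis.orthonormal.ne_zero i₀ (by ext v; exact congrFun h v)
  set x : V → ℝ := fun v => |y v| with hx
  have hxnn : ∀ v, 0 ≤ x v := fun v => abs_nonneg _
  have hxx : x ⬝ᵥ x = y ⬝ᵥ y := by
    simp [hx, dotProduct, abs_mul_abs_self]
  have hmono : y ⬝ᵥ (A *ᵥ y) ≤ x ⬝ᵥ (A *ᵥ x) := by
    simp only [dotProduct, Matrix.mulVec, Finset.mul_sum]
    refine Finset.sum_le_sum fun u _ => Finset.sum_le_sum fun v _ => ?_
    calc y u * (A u v * y v) = A u v * (y u * y v) := by ring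
      _ ≤ A u v * |y u * y v| := mul_le_mul_of_nonneg_left (le_abs_self _) (hAnn u v)
      _ = x u * (A u v * x v) := by rw [abs_mul]; ring
  have hray := rayleigh_le_iSup_eigenvalues A hA
  -- the matrix ρ•1 - A is PSD
  set B : Matrix V V ℝ := ρ • (1 : Matrix V V ℝ) - A with hB
  have hBmul : ∀ z : V → ℝ, B *ᵥ z = ρ • z - A *ᵥ z := fun z => by
    rw [hB, Matrix.sub_mulVec, Matrix.smul_mulVec, Matrix.one_mulVec]
  have hBher : B.IsHermitian := by
    rw [Matrix.IsHermitian, Matrix.conjTranspose_eq_transpose_of_trivial, hB,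
      Matrix.transpose_sub, Matrix.transpose_smul, Matrix.transpose_one, hAT]
  have hBpsd : B.PosSemidef := by
    refine Matrix.PosSemidef.of_dotProduct_mulVec_nonneg hBher fun z => ?_
    rw [star_trivial, hBmul, dotProduct_sub, dotProduct_smul, smul_eq_mul]
    have := hray z
    rw [← hρ] at this
    linarith
  have hxBx : x ⬝ᵥ (B *ᵥ x) = 0 := by
    have h1 : x ⬝ᵥ (B *ᵥ x) ≤ 0 := by
      rw [hBmul, dotProduct_sub, dotProduct_smul, smul_eq_mul, hxx]
      have h2 : y ⬝ᵥ (A *ᵥ y) = ρ * (y ⬝ᵥ y) := by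
        rw [hAy, dotProduct_smul, smul_eq_mul]
      linarith
    have h2 : 0 ≤ x ⬝ᵥ (B *ᵥ x) := by simpa [star_trivial] using hBpsd.dotProduct_mulVec_nonneg x
    linarith
  have hAx : A *ᵥ x = ρ • x := by
    have h0 := (hBpsd.dotProduct_mulVec_zero_iff x).mp (by simpa [star_trivial] using hxBx)
    rw [hBmul] at h0
    exact (sub_eq_zero.mp h0).symm
  -- f(A) x = f(ρ) x
  have hx0 : x ≠ 0 := by
    intro h
    apply hy0
    ext v
    have := congrFun h v
    simpa [hx, abs_eq_zero] using this
  have hfx : (Polynomial.aeval A f) *ᵥ x = f.eval ρ • x := by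
    have hEig : Module.End.HasEigenvector (Matrix.toLinAlgEquiv' A) ρ x :=
      ⟨Module.End.mem_eigenspace_iff.mpr (by rw [Matrix.toLinAlgEquiv'_apply, hAx]), hx0⟩
    have h1 := Module.End.aeval_apply_of_hasEigenvector (p := f) hEig
    have h2 : Polynomial.aeval (Matrix.toLinAlgEquiv' A) f
        = Matrix.toLinAlgEquiv' (Polynomial.aeval A f) :=
      Polynomial.aeval_algHom_apply (Matrix.toLinAlgEquiv' (R := ℝ) (n := V)) A f
    rw [h2, Matrix.toLinAlgEquiv'_apply] at h1
    exact h1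
  set M : Matrix V V ℝ := Polynomial.aeval A f with hM
  have hMT : Mᵀ = M := by
    rw [hM, Polynomial.aeval_eq_sum_range, Matrix.transpose_sum]
    simp [Matrix.transpose_smul, Matrix.transpose_pow, hAT]
  have hMsym : ∀ u v, M u v = M v u := fun u v => by
    have := congrFun (congrFun hMT v) u
    simpa using this
  set R : ℝ := Finset.univ.sup' Finset.univ_nonempty (fun u => ∑ v, M u v) with hR
  have hsum : f.eval ρ * ∑ v, x v = ∑ v, (∑ u, M v u) * x v := by
    have h3 := congrArg (fun w : V → ℝ => ∑ u, w u) hfx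
    simp only [Pi.smul_apply, smul_eq_mul, ← Finset.mul_sum] at h3
    calc f.eval ρ * ∑ v, x v = ∑ u, (M *ᵥ x) u := h3.symm
      _ = ∑ u, ∑ v, M u v * x v := by simp [Matrix.mulVec, dotProduct]
      _ = ∑ v, (∑ u, M u v) * x v := by rw [Finset.sum_comm]; simp [Finset.sum_mul]
      _ = ∑ v, (∑ u, M v u) * x v := by
          refine Finset.sum_congr rfl fun v _ => ?_
          congr 1
          exact Finset.sum_congr rfl fun u _ => hMsym u v
  have hS : 0 < ∑ v, x v := by
    obtain ⟨v₀, hv₀⟩ := Function.ne_iff.mp hy0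
    exact Finset.sum_pos' (fun v _ => hxnn v) ⟨v₀, Finset.mem_univ _, abs_pos.mpr hv₀⟩
  have hle : f.eval ρ * ∑ v, x v ≤ R * ∑ v, x v := by
    rw [hsum]
    calc ∑ v, (∑ u, M v u) * x v ≤ ∑ v, R * x v :=
          Finset.sum_le_sum fun v _ => mul_le_mul_of_nonneg_right
            (Finset.le_sup' (f := fun u => ∑ v, M u v) (Finset.mem_univ v)) (hxnn v)
      _ = R * ∑ v, x v := by rw [Finset.mul_sum]
  exact le_of_mul_le_mul_right hle hS
end

section
/- Let G be a finite simple graph with n vertices and m edges, adjacency matrix A, and let d = ⌈2m/n⌉. Then for every vertex u of G, the row sum of A² at the row indexed by u (equivalently, Σ_{v ∈ N(u)} d(v), the sum of the degrees of the neighbors of u) is at most (d−1)·d(u) + d + s(G)/2, where s(G) is the degree deviation of G and d(u) is the degree of u. -/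
open Finset Matrix

/-- For every vertex `u`, the row sum of `A²` at `u` (which equals the sum of the degrees
of the neighbors of `u`) is at most `(d-1)·d(u) + d + s(G)/2`, where `d = ⌈2m/n⌉`. -/
theorem rowSum_sq_adjMatrix_le
    {V : Type*} [Fintype V] [DecidableEq V] [Nonempty V]
    (G : SimpleGraph V) [DecidableRel G.Adj]
    (d : ℕ) (hd : d = ⌈2 * (G.edgeFinset.card : ℝ) / (Fintype.card V : ℝ)⌉₊) (u : V) :
    (∑ v, (G.adjMatrix ℝ * G.adjMatrix ℝ) u v = ∑ v ∈ G.neighborFinset u, (G.degree v : ℝ)) ∧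
    ∑ v, (G.adjMatrix ℝ * G.adjMatrix ℝ) u v ≤
      ((d : ℝ) - 1) * (G.degree u : ℝ) + (d : ℝ) + G.degreeDeviation / 2 := by
  classical
  set c : ℝ := 2 * (G.edgeFinset.card : ℝ) / (Fintype.card V : ℝ) with hc
  have hn : (0 : ℝ) < (Fintype.card V : ℝ) := by
    exact_mod_cast Fintype.card_pos
  have hc0 : 0 ≤ c := by positivity
  have hcd : c ≤ (d : ℝ) := by rw [hd]; exact Nat.le_ceil _
  -- part 1
  have h1 : ∑ v, (G.adjMatrix ℝ * G.adjMatrix ℝ) u v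
      = ∑ v ∈ G.neighborFinset u, (G.degree v : ℝ) := by
    have : ∀ v, (G.adjMatrix ℝ * G.adjMatrix ℝ) u v
        = ∑ w ∈ G.neighborFinset u, G.adjMatrix ℝ w v := fun v => by
      rw [SimpleGraph.adjMatrix_mul_apply]
    rw [Finset.sum_congr rfl fun v _ => this v, Finset.sum_comm]
    refine Finset.sum_congr rfl fun w _ => ?_
    rw [SimpleGraph.degree, SimpleGraph.neighborFinset_eq_filter, ← Finset.sum_boole]
    simp [SimpleGraph.adjMatrix_apply]
  refine ⟨h1, ?_⟩
  rw [h1]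
  -- total degree sum
  have h2m : ∑ v, (G.degree v : ℝ) = 2 * (G.edgeFinset.card : ℝ) := by
    have := G.sum_degrees_eq_twice_card_edges
    exact_mod_cast this
  have hsum0 : ∑ v, ((G.degree v : ℝ) - c) = 0 := by
    rw [Finset.sum_sub_distrib, h2m, Finset.sum_const, hc, Finset.card_univ, nsmul_eq_mul]
    field_simp [hn.ne']
    ring
  have hpos : ∑ v, max ((G.degree v : ℝ) - c) 0 = G.degreeDeviation / 2 := by
    have : ∀ x : ℝ, max x 0 = (x + |x|) / 2 := fun x => by
      rcases le_or_gt 0 x with h | h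
      · rw [max_eq_left h, abs_of_nonneg h]; ring
      · rw [max_eq_right h.le, abs_of_neg h]; ring
    simp only [this]
    rw [← Finset.sum_div, Finset.sum_add_distrib, hsum0, zero_add]
    rfl
  -- key bound
  have hsub : ∑ v ∈ G.neighborFinset u, max ((G.degree v : ℝ) - c) 0
      + max ((G.degree u : ℝ) - c) 0 ≤ ∑ v, max ((G.degree v : ℝ) - c) 0 := by
    have hu : u ∉ G.neighborFinset u := by simp
    rw [add_comm, ← Finset.sum_insert (f := fun v => max ((G.degree v : ℝ) - c) 0) hu]
    exact Finset.sum_le_sum_of_subset_of_nonneg (Finset.subset_univ _)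
      (fun v _ _ => le_max_right _ _)
  have key : ∑ v ∈ G.neighborFinset u, (G.degree v : ℝ)
      ≤ c * (G.degree u : ℝ) + (G.degreeDeviation / 2 - max ((G.degree u : ℝ) - c) 0) := by
    have h1' : ∑ v ∈ G.neighborFinset u, (G.degree v : ℝ)
        ≤ ∑ v ∈ G.neighborFinset u, (c + max ((G.degree v : ℝ) - c) 0) := by
      refine Finset.sum_le_sum fun v _ => ?_
      have := le_max_left ((G.degree v : ℝ) - c) 0
      linarith
    rw [Finset.sum_add_distrib, Finset.sum_const, G.card_neighborFinset_eq_degree,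
      nsmul_eq_mul] at h1'
    rw [← hpos] at *
    linarith
  have hdev0 : 0 ≤ ∑ v, max ((G.degree v : ℝ) - c) 0 :=
    Finset.sum_nonneg fun v _ => le_max_right _ _
  rw [← hpos] at *
  have hdu0 : (0 : ℝ) ≤ (G.degree u : ℝ) := Nat.cast_nonneg _
  rcases le_or_gt ((G.degree u : ℝ)) c with h | h
  · have hmax : max ((G.degree u : ℝ) - c) 0 = 0 := max_eq_right (by linarith)
    rw [hmax] at key
    nlinarith
  · have hmax : max ((G.degree u : ℝ) - c) 0 = (G.degree u : ℝ) - c :=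
      max_eq_left (by linarith)
    rw [hmax] at key
    nlinarith
end

section
/- Let G be a finite simple graph with n vertices and m edges, spectral radius ρ, and let d = ⌈2m/n⌉. Then ρ² − (d−1)ρ ≤ d + s(G)/2, where s(G) is the degree deviation of G. -/
open Finset Matrix

lemma SimpleGraph.exists_nonneg_eigenvector {V : Type*} [Fintype V] [DecidableEq V] [Nonempty V]
    (G : SimpleGraph V) [DecidableRel G.Adj] :
    ∃ z : V → ℝ, (∀ v, 0 ≤ z v) ∧ z ≠ 0 ∧
      G.adjMatrix ℝ *ᵥ z = G.spectralRadius • z := by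
  classical
  have hA := G.isHermitian_adjMatrix'
  set b := hA.eigenvectorBasis with hb
  set μ := hA.eigenvalues with hμ
  obtain ⟨i0, hi0⟩ : ∃ i0, ∀ i, μ i ≤ μ i0 := Finite.exists_max μ
  have hρ : G.spectralRadius = μ i0 :=
    le_antisymm (ciSup_le hi0) (le_ciSup (Set.finite_range μ).bddAbove i0)
  have horto : ∀ i j, (∑ v, b i v * b j v) = if i = j then (1:ℝ) else 0 := by
    intro i j
    have h := orthonormal_iff_ite.mp b.orthonormal i j
    simpa [PiLp.inner_apply, RCLike.inner_apply, mul_comm] using h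
  have heig : ∀ i, G.adjMatrix ℝ *ᵥ ⇑(b i) = μ i • ⇑(b i) := fun i => hA.mulVec_eigenvectorBasis i
  set y : V → ℝ := ⇑(b i0) with hy
  set z : V → ℝ := fun v => |y v| with hzdef
  set c : _ → ℝ := fun i => ∑ v, b i v * z v with hc
  have hrepr : ∀ v, z v = ∑ i, c i * b i v := by
    intro v
    have h := b.sum_repr' (WithLp.toLp 2 z)
    have h2 := congrFun (congrArg (fun f : EuclideanSpace ℝ V => (f : V → ℝ)) h) v
    simp only [PiLp.inner_apply, RCLike.inner_apply, starRingEnd_apply, star_trivial, WithLp.ofLp_toLp] at h2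
    rw [← h2]
    rw [WithLp.ofLp_sum, Finset.sum_apply]
    simp [hc, PiLp.smul_apply, smul_eq_mul, mul_comm]
  have hyy : ∑ v, y v * y v = 1 := by
    have := horto i0 i0; simpa using this
  have hzz : ∑ v, z v * z v = 1 := by
    rw [← hyy]
    exact Finset.sum_congr rfl fun v _ => by simp [hzdef, abs_mul_abs_self]
  have hAz : ∀ v, (G.adjMatrix ℝ *ᵥ z) v = ∑ i, μ i * (c i * b i v) := by
    intro v
    have : (G.adjMatrix ℝ *ᵥ z) v = ∑ w, G.adjMatrix ℝ v w * z w := rfl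
    rw [this]
    calc ∑ w, G.adjMatrix ℝ v w * z w
        = ∑ w, ∑ i, c i * (G.adjMatrix ℝ v w * b i w) := by
          refine Finset.sum_congr rfl fun w _ => ?_
          rw [hrepr w, Finset.mul_sum]
          exact Finset.sum_congr rfl fun i _ => by ring
      _ = ∑ i, c i * ∑ w, G.adjMatrix ℝ v w * b i w := by
          rw [Finset.sum_comm]
          exact Finset.sum_congr rfl fun i _ => by rw [Finset.mul_sum]
      _ = ∑ i, c i * (μ i * b i v) := by
          refine Finset.sum_congr rfl fun i _ => ?_
          congr 1
          have := congrFun (heig i) v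
          exact this
      _ = ∑ i, μ i * (c i * b i v) := Finset.sum_congr rfl fun i _ => by ring
  have hsumcc : ∑ i, c i * c i = 1 := by
    calc ∑ i, c i * c i = ∑ i, ∑ v, (c i * b i v) * z v := by
          refine Finset.sum_congr rfl fun i _ => ?_
          rw [hc]; rw [Finset.mul_sum]
          exact Finset.sum_congr rfl fun v _ => by ring
      _ = ∑ v, ∑ i, (c i * b i v) * z v := Finset.sum_comm
      _ = ∑ v, z v * z v := by
          refine Finset.sum_congr rfl fun v _ => ?_
          rw [← Finset.sum_mul, ← hrepr v]
      _ = 1 := hzz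
  have hAzz : ∑ v, z v * (G.adjMatrix ℝ *ᵥ z) v = ∑ i, μ i * (c i * c i) := by
    calc ∑ v, z v * (G.adjMatrix ℝ *ᵥ z) v
        = ∑ v, ∑ i, μ i * c i * (b i v * z v) := by
          refine Finset.sum_congr rfl fun v _ => ?_
          rw [hAz v, Finset.mul_sum]
          exact Finset.sum_congr rfl fun i _ => by ring
      _ = ∑ i, ∑ v, μ i * c i * (b i v * z v) := Finset.sum_comm
      _ = ∑ i, μ i * (c i * c i) := by
          refine Finset.sum_congr rfl fun i _ => ?_
          rw [← Finset.mul_sum]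
          have hci : (∑ w, b i w * z w) = c i := rfl
          rw [hci]; ring
  have hge : μ i0 ≤ ∑ v, z v * (G.adjMatrix ℝ *ᵥ z) v := by
    have hyAy : ∑ v, y v * (G.adjMatrix ℝ *ᵥ y) v = μ i0 := by
      calc ∑ v, y v * (G.adjMatrix ℝ *ᵥ y) v = ∑ v, y v * (μ i0 * y v) := by
            refine Finset.sum_congr rfl fun v _ => ?_
            congr 1
            exact congrFun (heig i0) v
        _ = μ i0 * ∑ v, y v * y v := by rw [Finset.mul_sum]; exact Finset.sum_congr rfl fun v _ => by ring
        _ = μ i0 := by rw [hyy, mul_one]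
    rw [← hyAy]
    refine Finset.sum_le_sum fun v _ => ?_
    have h1 : (G.adjMatrix ℝ *ᵥ y) v = ∑ w, G.adjMatrix ℝ v w * y w := rfl
    have h2 : (G.adjMatrix ℝ *ᵥ z) v = ∑ w, G.adjMatrix ℝ v w * z w := rfl
    rw [h1, h2, Finset.mul_sum, Finset.mul_sum]
    refine Finset.sum_le_sum fun w _ => ?_
    have hAnn : (0:ℝ) ≤ G.adjMatrix ℝ v w := by
      rw [SimpleGraph.adjMatrix_apply]; positivity
    have : y v * y w ≤ z v * z w := by
      calc y v * y w ≤ |y v * y w| := le_abs_self _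
        _ = z v * z w := by rw [abs_mul]
    calc y v * (G.adjMatrix ℝ v w * y w) = G.adjMatrix ℝ v w * (y v * y w) := by ring
      _ ≤ G.adjMatrix ℝ v w * (z v * z w) := by exact mul_le_mul_of_nonneg_left this hAnn
      _ = z v * (G.adjMatrix ℝ v w * z w) := by ring
  have hzero : ∀ i, (μ i0 - μ i) * (c i * c i) = 0 := by
    have hsum : ∑ i, (μ i0 - μ i) * (c i * c i) = 0 := by
      have hle : ∑ i, (μ i0 - μ i) * (c i * c i) ≤ 0 := by
        have : ∑ i, (μ i0 - μ i) * (c i * c i)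
            = μ i0 * ∑ i, c i * c i - ∑ i, μ i * (c i * c i) := by
          rw [Finset.mul_sum, ← Finset.sum_sub_distrib]
          exact Finset.sum_congr rfl fun i _ => by ring
        rw [this, hsumcc, mul_one, ← hAzz]
        linarith [hge]
      have hge0 : 0 ≤ ∑ i, (μ i0 - μ i) * (c i * c i) :=
        Finset.sum_nonneg fun i _ => mul_nonneg (by linarith [hi0 i]) (mul_self_nonneg _)
      linarith
    intro i
    have := (Finset.sum_eq_zero_iff_of_nonneg
      (fun i _ => mul_nonneg (by linarith [hi0 i]) (mul_self_nonneg (c i)))).mp hsum i (Finset.mem_univ i)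
    exact this
  have hmc : ∀ i, μ i * c i = μ i0 * c i := by
    intro i
    rcases eq_or_ne (c i) 0 with h | h
    · rw [h, mul_zero, mul_zero]
    · have h0 := hzero i
      rcases mul_eq_zero.mp h0 with h1 | h1
      · have : μ i = μ i0 := by linarith
        rw [this]
      · exact absurd (mul_self_eq_zero.mp h1) h
  refine ⟨z, fun v => abs_nonneg _, ?_, ?_⟩
  · intro h0
    rw [h0] at hzz
    simp at hzz
  · funext v
    rw [hρ]
    calc (G.adjMatrix ℝ *ᵥ z) v = ∑ i, μ i * (c i * b i v) := hAz v
      _ = ∑ i, μ i0 * (c i * b i v) := by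
          refine Finset.sum_congr rfl fun i _ => ?_
          rw [← mul_assoc, ← mul_assoc, hmc i]
      _ = μ i0 * ∑ i, c i * b i v := by rw [Finset.mul_sum]
      _ = μ i0 * z v := by rw [← hrepr v]
      _ = (μ i0 • z) v := rfl

/-- With `ρ = ρ(G)` and `d = ⌈2m/n⌉`, we have `ρ² - (d-1)ρ ≤ d + s(G)/2`. -/
theorem spectralRadius_quadratic_ineq
    {V : Type*} [Fintype V] [DecidableEq V] [Nonempty V]
    (G : SimpleGraph V) [DecidableRel G.Adj]
    (d : ℕ) (hd : d = ⌈2 * (G.edgeFinset.card : ℝ) / (Fintype.card V : ℝ)⌉₊) :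
    G.spectralRadius ^ 2 - ((d : ℝ) - 1) * G.spectralRadius ≤
      (d : ℝ) + G.degreeDeviation / 2 := by
  classical
  obtain ⟨z, hznn, hzne, hzeig⟩ := G.exists_nonneg_eigenvector
  set ρ := G.spectralRadius with hρdef
  set n : ℝ := (Fintype.card V : ℝ) with hn
  set m : ℝ := (G.edgeFinset.card : ℝ) with hm
  set a : ℝ := 2 * m / n with ha
  set s : ℝ := G.degreeDeviation with hsdev
  have hseq : s = ∑ w, |(G.degree w : ℝ) - a| := rfl
  have hn0 : 0 < n := by
    rw [hn]
    exact_mod_cast Fintype.card_pos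
  obtain ⟨u, hu⟩ : ∃ u, ∀ v, z v ≤ z u := Finite.exists_max z
  have hB : 0 < z u := by
    rcases Function.ne_iff.mp hzne with ⟨v, hv⟩
    exact lt_of_lt_of_le (lt_of_le_of_ne (hznn v) (Ne.symm hv)) (hu v)
  set S : ℝ := ∑ v, z v with hS
  have heq : ∀ v, ∑ w ∈ G.neighborFinset v, z w = ρ * z v := by
    intro v
    have h := congrFun hzeig v
    rw [SimpleGraph.adjMatrix_mulVec_apply] at h
    simpa using h
  have h1 : ∀ v, ρ * z v + z v ≤ S := by
    intro v
    have hsub : G.neighborFinset v ⊆ Finset.univ.erase v := by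
      intro w hw
      rw [Finset.mem_erase]
      refine ⟨?_, Finset.mem_univ w⟩
      exact ((SimpleGraph.mem_neighborFinset G v w).mp hw).ne'
    have hle : ∑ w ∈ G.neighborFinset v, z w ≤ ∑ w ∈ Finset.univ.erase v, z w :=
      Finset.sum_le_sum_of_subset_of_nonneg hsub (fun w _ _ => hznn w)
    have herase : ∑ w ∈ Finset.univ.erase v, z w = S - z v :=
      Finset.sum_erase_eq_sub (Finset.mem_univ v)
    rw [heq v] at hle
    rw [herase] at hle
    linarith
  have hsym : ∀ v w, G.adjMatrix ℝ v w = G.adjMatrix ℝ w v := by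
    intro v w
    simp [SimpleGraph.adjMatrix_apply, SimpleGraph.adj_comm]
  have hrow : ∀ v, ∑ w, G.adjMatrix ℝ v w = (G.degree v : ℝ) := by
    intro v
    simp [SimpleGraph.adjMatrix_apply, SimpleGraph.degree, SimpleGraph.neighborFinset_eq_filter,
      Finset.sum_boole]
  have h2 : ρ * S = ∑ w, (G.degree w : ℝ) * z w := by
    calc ρ * S = ∑ v, ρ * z v := by rw [hS, Finset.mul_sum]
      _ = ∑ v, ∑ w, G.adjMatrix ℝ v w * z w := by
          refine Finset.sum_congr rfl fun v _ => ?_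
          have h := congrFun hzeig v
          have hmv : (G.adjMatrix ℝ *ᵥ z) v = ∑ w, G.adjMatrix ℝ v w * z w := rfl
          rw [hmv] at h
          simpa using h.symm
      _ = ∑ w, ∑ v, G.adjMatrix ℝ v w * z w := Finset.sum_comm
      _ = ∑ w, (G.degree w : ℝ) * z w := by
          refine Finset.sum_congr rfl fun w _ => ?_
          rw [← Finset.sum_mul]
          congr 1
          rw [show ∑ v, G.adjMatrix ℝ v w = ∑ v, G.adjMatrix ℝ w v from
            Finset.sum_congr rfl fun v _ => hsym v w]
          exact hrow w
  have hdeg : ∑ w, (G.degree w : ℝ) = 2 * m := by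
    have h : (∑ v : V, G.degree v) = 2 * G.edgeFinset.card := G.sum_degrees_eq_twice_card_edges
    have h2 : ((∑ v : V, G.degree v : ℕ) : ℝ) = ((2 * G.edgeFinset.card : ℕ) : ℝ) := by rw [h]
    push_cast at h2
    rw [hm]
    linarith [h2]
  have hsumdev : ∑ w, ((G.degree w : ℝ) - a) = 0 := by
    rw [Finset.sum_sub_distrib, hdeg, Finset.sum_const, Finset.card_univ]
    have hcard : (Fintype.card V) • a = n * a := by rw [nsmul_eq_mul, hn]
    rw [hcard, ha]
    field_simp
    ring
  have h3 : ρ * S - a * S ≤ s / 2 * z u := by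
    have hzw : ∑ w, ((G.degree w : ℝ) - a) * z w ≤ ∑ w, (|(G.degree w : ℝ) - a| + ((G.degree w : ℝ) - a)) / 2 * z u := by
      refine Finset.sum_le_sum fun w _ => ?_
      rcases le_or_gt a (G.degree w : ℝ) with hcase | hcase
      · have habs : |(G.degree w : ℝ) - a| = (G.degree w : ℝ) - a := abs_of_nonneg (by linarith)
        rw [habs]
        have := hu w
        nlinarith [hznn w]
      · have habs : |(G.degree w : ℝ) - a| = -((G.degree w : ℝ) - a) := abs_of_neg (by linarith)
        rw [habs]
        nlinarith [hznn w]
    have hrhs : ∑ w, (|(G.degree w : ℝ) - a| + ((G.degree w : ℝ) - a)) / 2 * z u = s / 2 * z u := by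
      rw [← Finset.sum_mul]
      congr 1
      rw [show ∑ w, (|(G.degree w : ℝ) - a| + ((G.degree w : ℝ) - a)) / 2
          = ((∑ w, |(G.degree w : ℝ) - a|) + ∑ w, ((G.degree w : ℝ) - a)) / 2 by
        rw [← Finset.sum_add_distrib, Finset.sum_div]]
      rw [hsumdev, hseq]
      ring
    have hlhs : ρ * S - a * S = ∑ w, ((G.degree w : ℝ) - a) * z w := by
      rw [h2, hS, Finset.mul_sum, ← Finset.sum_sub_distrib]
      exact Finset.sum_congr rfl fun w _ => by ring
    rw [hlhs]
    calc ∑ w, ((G.degree w : ℝ) - a) * z w ≤ _ := hzw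
      _ = s / 2 * z u := hrhs
  have hρ0 : 0 ≤ ρ := by
    have h := heq u
    have hnn : 0 ≤ ∑ w ∈ G.neighborFinset u, z w := Finset.sum_nonneg fun w _ => hznn w
    nlinarith
  have hs0 : 0 ≤ s := by
    rw [hseq]
    exact Finset.sum_nonneg fun w _ => abs_nonneg _
  have had : a ≤ (d : ℝ) := by
    rw [hd]
    exact_mod_cast Nat.le_ceil a
  rcases le_or_gt ρ (d : ℝ) with hcase | hcase
  · nlinarith [mul_nonneg (sub_nonneg.mpr hcase) (show (0:ℝ) ≤ ρ + 1 by linarith)]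
  · have hkey : (ρ - a) * (ρ * z u + z u) ≤ (ρ - a) * S :=
      mul_le_mul_of_nonneg_left (h1 u) (by linarith)
    have hkey2 : (ρ - a) * S ≤ s / 2 * z u := by rw [sub_mul]; exact h3
    have hkey3 : (ρ - a) * (ρ + 1) * z u ≤ s / 2 * z u := by
      calc (ρ - a) * (ρ + 1) * z u = (ρ - a) * (ρ * z u + z u) := by ring
        _ ≤ (ρ - a) * S := hkey
        _ ≤ s / 2 * z u := hkey2
    have hkey4 : (ρ - a) * (ρ + 1) ≤ s / 2 := le_of_mul_le_mul_right hkey3 hB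
    have hfin : (ρ - (d : ℝ)) * (ρ + 1) ≤ s / 2 := by
      have h5 : (ρ - (d : ℝ)) * (ρ + 1) ≤ (ρ - a) * (ρ + 1) :=
        mul_le_mul_of_nonneg_right (by linarith) (by linarith)
      linarith
    nlinarith [hfin]
end

section
/- Let G be a finite simple graph with n vertices and m edges, spectral radius ρ, and let d = ⌈2m/n⌉. Then ρ ≤ d + √(s(G)/2), where s(G) is the degree deviation of G. -/
open Finset Matrix

section aux

variable {V : Type*} [Fintype V] [DecidableEq V] [Nonempty V]
  (G : SimpleGraph V) [DecidableRel G.Adj]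

/-- Rayleigh quotient upper bound by the spectral radius. -/
lemma rayleigh_le (x : V → ℝ) :
    x ⬝ᵥ (G.adjMatrix ℝ *ᵥ x) ≤ G.spectralRadius * (x ⬝ᵥ x) := by
  classical
  set hA := G.isHermitian_adjMatrix' with hhA
  have hρ : G.spectralRadius = ⨆ i, hA.eigenvalues i := rfl
  set U : Matrix V V ℝ := (hA.eigenvectorUnitary : Matrix V V ℝ) with hU
  have hUU : U * star U = 1 := (Matrix.mem_unitaryGroup_iff).mp hA.eigenvectorUnitary.2
  have hstar : star U = Uᵀ := by
    rw [Matrix.star_eq_conjTranspose, Matrix.conjTranspose_eq_transpose_of_trivial]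
  obtain ⟨z, hz⟩ : ∃ z : V → ℝ, z = star U *ᵥ x := ⟨_, rfl⟩
  have hvecmul : x ᵥ* U = z := by rw [hz, hstar, Matrix.mulVec_transpose]
  have hdiag : Matrix.diagonal (RCLike.ofReal ∘ hA.eigenvalues) =
      Matrix.diagonal hA.eigenvalues := by
    rw [RCLike.ofReal_real_eq_id, Function.id_comp]
  have hAx : G.adjMatrix ℝ *ᵥ x = U *ᵥ (Matrix.diagonal hA.eigenvalues *ᵥ z) := by
    rw [hz, Matrix.mulVec_mulVec, Matrix.mulVec_mulVec, ← hdiag]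
    conv_lhs => rw [hA.spectral_theorem, Unitary.conjStarAlgAut_apply]
  have key1 : x ⬝ᵥ (G.adjMatrix ℝ *ᵥ x) = ∑ i, hA.eigenvalues i * z i ^ 2 := by
    rw [hAx, Matrix.dotProduct_mulVec, hvecmul, dotProduct]
    refine Finset.sum_congr rfl fun i _ => ?_
    rw [Matrix.mulVec_diagonal]
    ring
  have key2 : x ⬝ᵥ x = ∑ i, z i ^ 2 := by
    have h2 : z ⬝ᵥ z = x ⬝ᵥ ((U * star U) *ᵥ x) := by
      rw [← Matrix.mulVec_mulVec, Matrix.dotProduct_mulVec, hvecmul, ← hz]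
    have h3 : z ⬝ᵥ z = x ⬝ᵥ x := by rw [h2, hUU, Matrix.one_mulVec]
    rw [← h3, dotProduct]
    refine Finset.sum_congr rfl fun i _ => ?_
    ring
  have hbdd : BddAbove (Set.range hA.eigenvalues) := (Set.finite_range _).bddAbove
  have hle : ∀ i, hA.eigenvalues i ≤ G.spectralRadius := fun i => by
    rw [hρ]; exact le_ciSup hbdd i
  calc x ⬝ᵥ (G.adjMatrix ℝ *ᵥ x) = ∑ i, hA.eigenvalues i * z i ^ 2 := key1
    _ ≤ ∑ i, G.spectralRadius * z i ^ 2 := by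
        refine Finset.sum_le_sum fun i _ => ?_
        exact mul_le_mul_of_nonneg_right (hle i) (sq_nonneg _)
    _ = G.spectralRadius * (x ⬝ᵥ x) := by rw [key2, Finset.mul_sum]

/-- Existence of a nonnegative eigenvector for the spectral radius. -/
lemma exists_perron : ∃ y : V → ℝ, (∀ v, 0 ≤ y v) ∧ y ≠ 0 ∧
    G.adjMatrix ℝ *ᵥ y = G.spectralRadius • y := by
  classical
  set hA := G.isHermitian_adjMatrix' with hhA
  have hρ : G.spectralRadius = ⨆ i, hA.eigenvalues i := rfl
  obtain ⟨i₀, hi₀⟩ := exists_eq_ciSup_of_finite (f := hA.eigenvalues)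
  set x : V → ℝ := ⇑(hA.eigenvectorBasis i₀) with hxdef
  have hx : G.adjMatrix ℝ *ᵥ x = G.spectralRadius • x := by
    rw [hρ, ← hi₀]
    exact hA.mulVec_eigenvectorBasis i₀
  have hxne : x ≠ 0 := by
    intro h
    have := hA.eigenvectorBasis.orthonormal.ne_zero i₀
    apply this
    ext v
    exact congrFun h v
  set y : V → ℝ := fun v => |x v| with hy
  have hynn : ∀ v, 0 ≤ y v := fun v => abs_nonneg _
  have hyne : y ≠ 0 := by
    intro h
    apply hxne
    ext v
    have := congrFun h v
    simpa [hy, abs_eq_zero] using this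
  have hyy : y ⬝ᵥ y = x ⬝ᵥ x := by
    simp only [dotProduct, hy]
    exact Finset.sum_congr rfl fun v _ => abs_mul_abs_self _
  have hxAx : x ⬝ᵥ (G.adjMatrix ℝ *ᵥ x) = G.spectralRadius * (x ⬝ᵥ x) := by
    rw [hx, dotProduct_smul, smul_eq_mul]
  have hyAy : x ⬝ᵥ (G.adjMatrix ℝ *ᵥ x) ≤ y ⬝ᵥ (G.adjMatrix ℝ *ᵥ y) := by
    simp only [dotProduct, SimpleGraph.adjMatrix_mulVec_apply]
    refine Finset.sum_le_sum fun v _ => ?_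
    rw [Finset.mul_sum, Finset.mul_sum]
    refine Finset.sum_le_sum fun u _ => ?_
    calc x v * x u ≤ |x v * x u| := le_abs_self _
      _ = y v * y u := by rw [abs_mul]
  set M : Matrix V V ℝ := G.spectralRadius • (1 : Matrix V V ℝ) - G.adjMatrix ℝ with hM
  have hMherm : M.IsHermitian := by
    rw [Matrix.IsHermitian, hM, Matrix.conjTranspose_sub, Matrix.conjTranspose_smul,
      Matrix.conjTranspose_one, hA, star_trivial]
  have hMform : ∀ w : V → ℝ, w ⬝ᵥ (M *ᵥ w) =
      G.spectralRadius * (w ⬝ᵥ w) - w ⬝ᵥ (G.adjMatrix ℝ *ᵥ w) := by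
    intro w
    rw [hM, Matrix.sub_mulVec, dotProduct_sub, Matrix.smul_mulVec,
      Matrix.one_mulVec, dotProduct_smul, smul_eq_mul]
  have hMpsd : M.PosSemidef := by
    refine Matrix.PosSemidef.of_dotProduct_mulVec_nonneg hMherm fun w => ?_
    rw [star_trivial, hMform w]
    have := rayleigh_le G w
    linarith
  have hyMy : y ⬝ᵥ (M *ᵥ y) = 0 := by
    have h1 : (0:ℝ) ≤ y ⬝ᵥ (M *ᵥ y) := by
      have := hMpsd.dotProduct_mulVec_nonneg y
      rwa [star_trivial] at this
    have h2 : y ⬝ᵥ (M *ᵥ y) ≤ 0 := by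
      rw [hMform y, hyy]
      linarith [hyAy, hxAx]
    linarith
  have hMy : M *ᵥ y = 0 := by
    have := (hMpsd.dotProduct_mulVec_zero_iff y).mp
    rw [star_trivial] at this
    exact this hyMy
  refine ⟨y, hynn, hyne, ?_⟩
  have : G.spectralRadius • y - G.adjMatrix ℝ *ᵥ y = 0 := by
    rw [← hMy, hM, Matrix.sub_mulVec, Matrix.smul_mulVec, Matrix.one_mulVec]
  exact (sub_eq_zero.mp this).symm

end aux

/-- With `d = ⌈2m/n⌉`, we have `ρ(G) ≤ d + √(s(G)/2)`. -/
theorem spectralRadius_le_ceil_add_sqrt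
    {V : Type*} [Fintype V] [DecidableEq V] [Nonempty V]
    (G : SimpleGraph V) [DecidableRel G.Adj]
    (d : ℕ) (hd : d = ⌈2 * (G.edgeFinset.card : ℝ) / (Fintype.card V : ℝ)⌉₊) :
    G.spectralRadius ≤ (d : ℝ) + Real.sqrt (G.degreeDeviation / 2) := by
  classical
  set ρ := G.spectralRadius with hρdef
  by_cases hcase : ρ ≤ (d : ℝ)
  · exact hcase.trans (le_add_of_nonneg_right (Real.sqrt_nonneg _))
  push_neg at hcase
  have hn0 : (0:ℝ) < (Fintype.card V : ℝ) := by exact_mod_cast Fintype.card_pos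
  set c : ℝ := 2 * (G.edgeFinset.card : ℝ) / (Fintype.card V : ℝ) with hc
  have hc0 : 0 ≤ c := by positivity
  have hcd : c ≤ (d : ℝ) := by rw [hd]; exact Nat.le_ceil c
  have hρ0 : (0:ℝ) < ρ := lt_of_le_of_lt (Nat.cast_nonneg d) hcase
  have hdegsum : ∑ v, (G.degree v : ℝ) = 2 * (G.edgeFinset.card : ℝ) := by
    exact_mod_cast congrArg (Nat.cast : ℕ → ℝ) G.sum_degrees_eq_twice_card_edges
  set g : V → ℝ := fun v => max ((G.degree v : ℝ) - c) 0 with hg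
  have hg0 : ∀ v, 0 ≤ g v := fun v => le_max_right _ _
  have hgle : ∀ v, (G.degree v : ℝ) - c ≤ g v := fun v => le_max_left _ _
  have hgled : ∀ v, g v ≤ (G.degree v : ℝ) := fun v =>
    max_le (by linarith) (Nat.cast_nonneg _)
  set σ : ℝ := ∑ v, g v with hσ
  have hσ0 : 0 ≤ σ := Finset.sum_nonneg fun v _ => hg0 v
  have hdev : G.degreeDeviation = ∑ v, |(G.degree v : ℝ) - c| := rfl
  have hzero : ∑ v, ((G.degree v : ℝ) - c) = 0 := by
    rw [Finset.sum_sub_distrib, hdegsum, Finset.sum_const, Finset.card_univ, nsmul_eq_mul, hc]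
    field_simp
    ring
  have hσs : σ = G.degreeDeviation / 2 := by
    have h2σ : 2 * σ = G.degreeDeviation := by
      rw [hσ, Finset.mul_sum, hdev]
      have : ∀ v : V, 2 * g v = |(G.degree v : ℝ) - c| + ((G.degree v : ℝ) - c) := by
        intro v
        rcases le_total ((G.degree v : ℝ) - c) 0 with h | h
        · rw [hg]; simp only
          rw [max_eq_right h, abs_of_nonpos h]; ring
        · rw [hg]; simp only
          rw [max_eq_left h, abs_of_nonneg h]; ring
      rw [Finset.sum_congr rfl fun v _ => this v, Finset.sum_add_distrib, hzero, add_zero]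
    linarith
  obtain ⟨y, hynn, hyne, hAy⟩ := exists_perron G
  set Y := ∑ v, y v with hY
  have hY0 : 0 < Y := by
    obtain ⟨v, hv⟩ : ∃ v, y v ≠ 0 := by
      by_contra h; push_neg at h; exact hyne (funext h)
    exact Finset.sum_pos' (fun u _ => hynn u)
      ⟨v, Finset.mem_univ v, lt_of_le_of_ne (hynn v) (Ne.symm hv)⟩
  have hF3 : ρ * Y = ∑ v, (G.degree v : ℝ) * y v := by
    have hcol : ∀ u, ∑ v, (G.adjMatrix ℝ) v u = (G.degree u : ℝ) := by
      intro u
      have hsymm : ∀ v, (G.adjMatrix ℝ) v u = (G.adjMatrix ℝ) u v := fun v => by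
        simp [SimpleGraph.adjMatrix_apply, G.adj_comm]
      rw [Finset.sum_congr rfl fun v _ => hsymm v]
      simp [SimpleGraph.adjMatrix_apply, SimpleGraph.degree, SimpleGraph.neighborFinset_eq_filter]
      show ∑ v, G.adjMatrix ℝ u v = _
      simp [SimpleGraph.adjMatrix_apply, Finset.sum_boole]
    have h1 : ∑ v, (G.adjMatrix ℝ *ᵥ y) v = ρ * Y := by
      rw [hAy, hY, Finset.mul_sum]
      exact Finset.sum_congr rfl fun v _ => rfl
    calc ρ * Y = ∑ v, (G.adjMatrix ℝ *ᵥ y) v := h1.symm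
      _ = ∑ v, ∑ u, (G.adjMatrix ℝ) v u * y u := rfl
      _ = ∑ u, ∑ v, (G.adjMatrix ℝ) v u * y u := Finset.sum_comm
      _ = ∑ u, (G.degree u : ℝ) * y u := by
          refine Finset.sum_congr rfl fun u _ => ?_
          rw [← Finset.sum_mul, hcol u]
  obtain ⟨vm, _, hvmax⟩ := Finset.exists_max_image (Finset.univ : Finset V) y
    ⟨Classical.arbitrary V, Finset.mem_univ _⟩
  have hAyv : ∑ u ∈ G.neighborFinset vm, y u = ρ * y vm := by
    have h := congrFun hAy vm
    simpa [SimpleGraph.adjMatrix_mulVec_apply] using h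
  have h6 : (1 + ρ) * y vm ≤ Y := by
    have hsum : ∑ u ∈ insert vm (G.neighborFinset vm), y u ≤ Y :=
      Finset.sum_le_sum_of_subset_of_nonneg (Finset.subset_univ _) (fun u _ _ => hynn u)
    rw [Finset.sum_insert (G.notMem_neighborFinset_self vm), hAyv] at hsum
    linarith
  have h5 : ∑ v, (G.degree v : ℝ) * (y v) ^ 2 ≤ Y ^ 2 := by
    have h51 : ∑ v, (G.degree v : ℝ) * (y v) ^ 2 ≤ y vm * ∑ v, (G.degree v : ℝ) * y v := by
      rw [Finset.mul_sum]
      refine Finset.sum_le_sum fun v _ => ?_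
      have h1 := hvmax v (Finset.mem_univ v)
      have h2 := hynn v
      have h3 : (0:ℝ) ≤ (G.degree v : ℝ) := Nat.cast_nonneg _
      nlinarith [mul_nonneg (mul_nonneg h3 h2) (sub_nonneg.mpr h1)]
    have h52 : y vm * (ρ * Y) ≤ Y ^ 2 := by nlinarith [hynn vm]
    calc ∑ v, (G.degree v : ℝ) * (y v) ^ 2 ≤ y vm * ∑ v, (G.degree v : ℝ) * y v := h51
      _ = y vm * (ρ * Y) := by rw [← hF3]
      _ ≤ Y ^ 2 := h52
  have e2 : ∑ v, ((G.degree v : ℝ) - c) * y v ≤ ∑ v, g v * y v :=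
    Finset.sum_le_sum fun v _ => mul_le_mul_of_nonneg_right (hgle v) (hynn v)
  have e3 : (∑ v, g v * y v) ^ 2 ≤ σ * ∑ v, g v * (y v) ^ 2 := by
    have hcs := Finset.sum_mul_sq_le_sq_mul_sq Finset.univ
      (fun v => Real.sqrt (g v)) (fun v => Real.sqrt (g v) * y v)
    have l1 : ∀ v : V, Real.sqrt (g v) * (Real.sqrt (g v) * y v) = g v * y v := fun v => by
      rw [← mul_assoc, Real.mul_self_sqrt (hg0 v)]
    have l2 : ∀ v : V, Real.sqrt (g v) ^ 2 = g v := fun v => Real.sq_sqrt (hg0 v)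
    have l3 : ∀ v : V, (Real.sqrt (g v) * y v) ^ 2 = g v * (y v) ^ 2 := fun v => by
      rw [mul_pow, l2 v]
    rw [Finset.sum_congr rfl fun v _ => l1 v, Finset.sum_congr rfl fun v _ => l2 v,
      Finset.sum_congr rfl fun v _ => l3 v] at hcs
    exact hcs
  have e4 : ∑ v, g v * (y v) ^ 2 ≤ ∑ v, (G.degree v : ℝ) * (y v) ^ 2 :=
    Finset.sum_le_sum fun v _ => mul_le_mul_of_nonneg_right (hgled v) (sq_nonneg _)
  have e5 : ∑ v, g v * y v ≤ Real.sqrt σ * Y := by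
    have h0 : (0:ℝ) ≤ ∑ v, g v * y v :=
      Finset.sum_nonneg fun v _ => mul_nonneg (hg0 v) (hynn v)
    have hsq : (∑ v, g v * y v) ^ 2 ≤ (Real.sqrt σ * Y) ^ 2 := by
      rw [mul_pow, Real.sq_sqrt hσ0]
      calc (∑ v, g v * y v) ^ 2 ≤ σ * ∑ v, g v * (y v) ^ 2 := e3
        _ ≤ σ * ∑ v, (G.degree v : ℝ) * (y v) ^ 2 := mul_le_mul_of_nonneg_left e4 hσ0
        _ ≤ σ * Y ^ 2 := mul_le_mul_of_nonneg_left h5 hσ0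
    exact (pow_le_pow_iff_left₀ h0 (mul_nonneg (Real.sqrt_nonneg _) hY0.le) two_ne_zero).mp hsq
  have e1 : (ρ - c) * Y = ∑ v, ((G.degree v : ℝ) - c) * y v := by
    have : ∑ v, ((G.degree v : ℝ) - c) * y v
        = (∑ v, (G.degree v : ℝ) * y v) - c * Y := by
      rw [hY, Finset.mul_sum, ← Finset.sum_sub_distrib]
      exact Finset.sum_congr rfl fun v _ => by ring
    rw [this, ← hF3]; ring
  have hkey : ρ - c ≤ Real.sqrt σ := by
    have hchain : (ρ - c) * Y ≤ Real.sqrt σ * Y := by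
      rw [e1]; exact e2.trans e5
    exact le_of_mul_le_mul_right hchain hY0
  have : Real.sqrt σ = Real.sqrt (G.degreeDeviation / 2) := by rw [hσs]
  rw [this] at hkey
  linarith
end

section
/- Let G be a finite simple graph with n vertices and m edges and spectral radius ρ. Then ρ − 2m/n ≤ 1 + √(s(G)/2), where s(G) is the degree deviation of G. -/
open Finset Matrix

/-- Weighted row-sum bound on eigenvalues of the adjacency matrix: if `p` is a positive
vector with `∑_{u ~ v} p u ≤ C * p v` for all `v`, then any eigenvalue `μ` satisfies
`μ ≤ C`. -/
lemma eig_le_of_weight {V : Type*} [Fintype V] [DecidableEq V] [Nonempty V]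
    (G : SimpleGraph V) [DecidableRel G.Adj] (p : V → ℝ) (hp : ∀ v, 0 < p v) (C : ℝ)
    (hC : ∀ v, ∑ u ∈ G.neighborFinset v, p u ≤ C * p v)
    (μ : ℝ) (x : V → ℝ) (hx : x ≠ 0) (hmul : G.adjMatrix ℝ *ᵥ x = μ • x) : μ ≤ C := by
  obtain ⟨v, -, hv⟩ := Finset.exists_max_image Finset.univ (fun u => |x u| / p u)
    Finset.univ_nonempty
  have hv' : ∀ u, |x u| * p v ≤ |x v| * p u := by
    intro u
    have := hv u (Finset.mem_univ u)
    rwa [div_le_div_iff₀ (hp u) (hp v)] at this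
  have hxv : 0 < |x v| := by
    rcases Function.ne_iff.mp hx with ⟨u, hu⟩
    have h1 : 0 < |x u| * p v := mul_pos (abs_pos.mpr hu) (hp v)
    have h2 := lt_of_lt_of_le h1 (hv' u)
    nlinarith [hp u, abs_nonneg (x v)]
  have key : μ * (|x v| * p v) ≤ C * (|x v| * p v) := by
    have h1 : μ * |x v| ≤ |μ * x v| := by
      rw [abs_mul]
      exact mul_le_mul_of_nonneg_right (le_abs_self μ) (abs_nonneg _)
    have h2 : μ * x v = (G.adjMatrix ℝ *ᵥ x) v := by rw [hmul]; rfl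
    have h3 : |(G.adjMatrix ℝ *ᵥ x) v| ≤ ∑ u ∈ G.neighborFinset v, |x u| := by
      rw [SimpleGraph.adjMatrix_mulVec_apply]
      exact Finset.abs_sum_le_sum_abs _ _
    have h4 : (∑ u ∈ G.neighborFinset v, |x u|) * p v
        ≤ |x v| * ∑ u ∈ G.neighborFinset v, p u := by
      rw [Finset.sum_mul, Finset.mul_sum]
      exact Finset.sum_le_sum fun u _ => hv' u
    have h5 : |x v| * ∑ u ∈ G.neighborFinset v, p u ≤ |x v| * (C * p v) :=
      mul_le_mul_of_nonneg_left (hC v) (abs_nonneg _)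
    calc μ * (|x v| * p v) = (μ * |x v|) * p v := by ring
      _ ≤ |μ * x v| * p v := mul_le_mul_of_nonneg_right h1 (hp v).le
      _ = |(G.adjMatrix ℝ *ᵥ x) v| * p v := by rw [h2]
      _ ≤ (∑ u ∈ G.neighborFinset v, |x u|) * p v :=
          mul_le_mul_of_nonneg_right h3 (hp v).le
      _ ≤ |x v| * ∑ u ∈ G.neighborFinset v, p u := h4
      _ ≤ |x v| * (C * p v) := h5
      _ = C * (|x v| * p v) := by ring
  exact le_of_mul_le_mul_right key (mul_pos hxv (hp v))

/-- `ρ(G) - 2m/n ≤ 1 + √(s(G)/2)`. -/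
theorem spectralRadius_sub_avgDegree_le_one_add_sqrt
    {V : Type*} [Fintype V] [DecidableEq V] [Nonempty V]
    (G : SimpleGraph V) [DecidableRel G.Adj] :
    G.spectralRadius - 2 * (G.edgeFinset.card : ℝ) / (Fintype.card V : ℝ) ≤
      1 + Real.sqrt (G.degreeDeviation / 2) := by
  have hn : (0 : ℝ) < (Fintype.card V : ℝ) := by
    exact_mod_cast Fintype.card_pos
  set n : ℝ := (Fintype.card V : ℝ) with hn'
  set d : ℝ := 2 * (G.edgeFinset.card : ℝ) / n with hd'
  have hd0 : 0 ≤ d := by positivity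
  set s : ℝ := G.degreeDeviation with hs'
  have hs0 : 0 ≤ s := Finset.sum_nonneg fun v _ => abs_nonneg _
  set t : ℝ := Real.sqrt (s / 2) with ht'
  have ht0 : 0 ≤ t := Real.sqrt_nonneg _
  set c : ℝ := max t 1 with hc'
  have hc1 : (1 : ℝ) ≤ c := le_max_right _ _
  have hc0 : (0 : ℝ) < c := lt_of_lt_of_le one_pos hc1
  have hct : t ≤ c := le_max_left _ _
  have hc2 : s / 2 ≤ c ^ 2 := by
    have : t ^ 2 = s / 2 := Real.sq_sqrt (by linarith)
    nlinarith
  -- sum of degrees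
  have hsum0 : ∑ v, ((G.degree v : ℝ) - d) = 0 := by
    rw [Finset.sum_sub_distrib, Finset.sum_const]
    have h1 : ∑ v, (G.degree v : ℝ) = 2 * (G.edgeFinset.card : ℝ) := by
      exact_mod_cast congrArg (fun k : ℕ => (k : ℝ)) G.sum_degrees_eq_twice_card_edges
    rw [h1]
    have h2 : ((Finset.univ : Finset V).card : ℝ) = n := by rw [hn', Finset.card_univ]
    rw [nsmul_eq_mul, h2, hd']
    field_simp
    ring
  -- sum of positive parts is s/2
  have hpospart : ∑ v, max ((G.degree v : ℝ) - d) 0 = s / 2 := by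
    have h : ∀ v : V, max ((G.degree v : ℝ) - d) 0
        = (((G.degree v : ℝ) - d) + |(G.degree v : ℝ) - d|) / 2 := by
      intro v
      rcases le_total ((G.degree v : ℝ) - d) 0 with h | h
      · rw [max_eq_right h, abs_of_nonpos h]; ring
      · rw [max_eq_left h, abs_of_nonneg h]; ring
    simp_rw [h]
    rw [← Finset.sum_div, Finset.sum_add_distrib, hsum0, zero_add, hs']
    rfl
  -- the weight vector
  set p : V → ℝ := fun v => (G.degree v : ℝ) + c with hp'
  have hp : ∀ v, 0 < p v := by
    intro v
    have : (0 : ℝ) ≤ (G.degree v : ℝ) := Nat.cast_nonneg _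
    simp only [hp']
    linarith
  have hC : ∀ v, ∑ u ∈ G.neighborFinset v, p u ≤ (d + c) * p v := by
    intro v
    have hsplit : ∑ u ∈ G.neighborFinset v, p u
        = (∑ u ∈ G.neighborFinset v, ((G.degree u : ℝ) - d)) + (d + c) * (G.degree v : ℝ) := by
      have hcard : ((G.neighborFinset v).card : ℝ) = (G.degree v : ℝ) := by
        exact_mod_cast congrArg (fun k : ℕ => (k : ℝ)) (G.card_neighborFinset_eq_degree v)
      rw [← hcard]
      rw [Finset.sum_add_distrib, Finset.sum_sub_distrib] at *
      simp only [hp', Finset.sum_const, nsmul_eq_mul]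
      ring
    have hbound : ∑ u ∈ G.neighborFinset v, ((G.degree u : ℝ) - d) ≤ s / 2 := by
      calc ∑ u ∈ G.neighborFinset v, ((G.degree u : ℝ) - d)
          ≤ ∑ u ∈ G.neighborFinset v, max ((G.degree u : ℝ) - d) 0 :=
            Finset.sum_le_sum fun u _ => le_max_left _ _
        _ ≤ ∑ u, max ((G.degree u : ℝ) - d) 0 :=
            Finset.sum_le_sum_of_subset_of_nonneg (Finset.subset_univ _)
              (fun u _ _ => le_max_right _ _)
        _ = s / 2 := hpospart
    have : ∑ u ∈ G.neighborFinset v, p u ≤ c ^ 2 + (d + c) * (G.degree v : ℝ) := by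
      rw [hsplit]; linarith
    calc ∑ u ∈ G.neighborFinset v, p u ≤ c ^ 2 + (d + c) * (G.degree v : ℝ) := this
      _ ≤ (d + c) * p v := by
          simp only [hp']
          nlinarith
  -- all eigenvalues are at most d + c
  have heig : ∀ i : V, (G.isHermitian_adjMatrix').eigenvalues i ≤ d + c := by
    intro i
    set hA := G.isHermitian_adjMatrix'
    apply eig_le_of_weight G p hp (d + c) hC (hA.eigenvalues i) (hA.eigenvectorBasis i)
    · intro h
      apply hA.eigenvectorBasis.orthonormal.ne_zero i
      ext u
      exact congrFun h u
    · exact hA.mulVec_eigenvectorBasis i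
  have hrho : G.spectralRadius ≤ d + c := ciSup_le heig
  have hcle : c ≤ 1 + t := by
    rw [hc']
    exact max_le (by linarith) (by linarith)
  calc G.spectralRadius - d ≤ c := by linarith
    _ ≤ 1 + t := hcle
end

section
/- For n ≥ 2, let S_n denote the star graph on n vertices (one center joined to n−1 leaves), which has m = n−1 edges and spectral radius ρ(S_n) = √(n−1). Then the ratio (ρ(S_n) − 2(n−1)/n) / √(s(S_n)) tends to √(1/2) as n → ∞, where s(S_n) is the degree deviation of S_n. In particular, the constant 1/2 in the bound ρ(G) − 2m/n ≤ √(s(G)/2) is best possible. -/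
open Finset Matrix

/-- The star graph on `n` vertices: one center joined to `n - 1` leaves,
realized as the complete bipartite graph `K_{1,n-1}`. -/
def starGraph (n : ℕ) : SimpleGraph (Fin 1 ⊕ Fin (n - 1)) :=
  completeBipartiteGraph (Fin 1) (Fin (n - 1))

instance (n : ℕ) : DecidableRel (starGraph n).Adj := fun x y =>
  inferInstanceAs (Decidable (x.isLeft ∧ y.isRight ∨ x.isRight ∧ y.isLeft))


/-! ### Auxiliary lemmas -/

lemma StarAux.mem_spectrum_iff_exists {N : Type*} [Fintype N] [DecidableEq N]
    (A : Matrix N N ℝ) (μ : ℝ) :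
    μ ∈ spectrum ℝ A ↔ ∃ v : N → ℝ, v ≠ 0 ∧ A *ᵥ v = μ • v := by
  rw [← AlgEquiv.spectrum_eq (Matrix.toLinAlgEquiv (Pi.basisFun ℝ N)),
    ← Module.End.hasEigenvalue_iff_mem_spectrum]
  have key : ∀ v : N → ℝ, (Matrix.toLinAlgEquiv (Pi.basisFun ℝ N)) A v = A *ᵥ v := by
    intro v
    rw [show Matrix.toLinAlgEquiv (Pi.basisFun ℝ N) A
        = Matrix.toLin (Pi.basisFun ℝ N) (Pi.basisFun ℝ N) A from rfl,
      Matrix.toLin_eq_toLin', Matrix.toLin'_apply]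
  constructor
  · intro h
    obtain ⟨v, hv⟩ := h.exists_hasEigenvector
    refine ⟨v, hv.2, ?_⟩
    have := hv.apply_eq_smul
    rwa [key] at this
  · rintro ⟨v, hv0, hv⟩
    refine Module.End.hasEigenvalue_of_hasEigenvector ⟨?_, hv0⟩
    rw [Module.End.mem_eigenspace_iff, key]
    exact hv

lemma StarAux.spectrum_eq_range {N : Type*} [Fintype N] [DecidableEq N] {A : Matrix N N ℝ}
    (hA : A.IsHermitian) : spectrum ℝ A = Set.range hA.eigenvalues := by
  conv_lhs => rw [hA.spectral_theorem]
  have h1 : (hA.eigenvectorUnitary : Matrix N N ℝ)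
        * Matrix.diagonal (RCLike.ofReal ∘ hA.eigenvalues)
        * (star (hA.eigenvectorUnitary : Matrix N N ℝ))
      = ((Unitary.toUnits hA.eigenvectorUnitary : (Matrix N N ℝ)ˣ) : Matrix N N ℝ)
        * Matrix.diagonal (RCLike.ofReal ∘ hA.eigenvalues)
        * ((((Unitary.toUnits hA.eigenvectorUnitary : (Matrix N N ℝ)ˣ))⁻¹ :
            (Matrix N N ℝ)ˣ) : Matrix N N ℝ) := rfl
  rw [Unitary.conjStarAlgAut_apply, h1, spectrum.units_conjugate, spectrum_diagonal]
  ext x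
  constructor
  · rintro ⟨i, rfl⟩; exact ⟨i, rfl⟩
  · rintro ⟨i, rfl⟩; exact ⟨i, rfl⟩

lemma StarAux.deg_inl (n : ℕ) (i : Fin 1) : (starGraph n).degree (Sum.inl i) = n - 1 := by
  rw [← SimpleGraph.card_neighborSet_eq_degree]
  have : (starGraph n).neighborSet (Sum.inl i) = Set.range Sum.inr := by
    ext w; cases w <;> simp [starGraph, SimpleGraph.neighborSet]
  simp_rw [this]
  rw [Set.card_range_of_injective Sum.inr_injective, Fintype.card_fin]

lemma StarAux.deg_inr (n : ℕ) (j : Fin (n-1)) : (starGraph n).degree (Sum.inr j) = 1 := by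
  rw [← SimpleGraph.card_neighborSet_eq_degree]
  have : (starGraph n).neighborSet (Sum.inr j) = Set.range Sum.inl := by
    ext w; cases w <;> simp [starGraph, SimpleGraph.neighborSet]
  simp_rw [this]
  rw [Set.card_range_of_injective Sum.inl_injective, Fintype.card_fin]

lemma StarAux.card_edges (n : ℕ) : (starGraph n).edgeFinset.card = n - 1 := by
  have h := SimpleGraph.sum_degrees_eq_twice_card_edges (starGraph n)
  rw [Fintype.sum_sum_type] at h
  simp only [StarAux.deg_inl, StarAux.deg_inr, Finset.sum_const, Finset.card_univ,
    Fintype.card_fin, smul_eq_mul, one_mul, mul_one] at h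
  omega

lemma StarAux.card_verts (n : ℕ) (hn : 2 ≤ n) : Fintype.card (Fin 1 ⊕ Fin (n-1)) = n := by
  simp [Fintype.card_sum]; omega

lemma StarAux.mulVec_inl (n : ℕ) (v : Fin 1 ⊕ Fin (n-1) → ℝ) (i : Fin 1) :
    (((starGraph n).adjMatrix ℝ) *ᵥ v) (Sum.inl i) = ∑ j, v (Sum.inr j) := by
  simp only [Matrix.mulVec, dotProduct, Fintype.sum_sum_type, SimpleGraph.adjMatrix_apply]
  simp [starGraph]

lemma StarAux.mulVec_inr (n : ℕ) (v : Fin 1 ⊕ Fin (n-1) → ℝ) (j : Fin (n-1)) :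
    (((starGraph n).adjMatrix ℝ) *ᵥ v) (Sum.inr j) = v (Sum.inl 0) := by
  simp only [Matrix.mulVec, dotProduct, Fintype.sum_sum_type, SimpleGraph.adjMatrix_apply]
  simp [starGraph]

lemma StarAux.eig_dichotomy (n : ℕ) (hn : 2 ≤ n) (μ : ℝ) (v : Fin 1 ⊕ Fin (n-1) → ℝ)
    (hv0 : v ≠ 0) (hv : ((starGraph n).adjMatrix ℝ) *ᵥ v = μ • v) :
    μ ^ 2 = (n : ℝ) - 1 ∨ μ = 0 := by
  have hL : ∑ j, v (Sum.inr j) = μ * v (Sum.inl 0) := by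
    have := congrFun hv (Sum.inl 0); rwa [StarAux.mulVec_inl] at this
  have hR : ∀ j, v (Sum.inl 0) = μ * v (Sum.inr j) := by
    intro j
    have := congrFun hv (Sum.inr j); rwa [StarAux.mulVec_inr] at this
  by_cases hc : v (Sum.inl 0) = 0
  · right
    by_contra hμ
    apply hv0
    funext w
    cases w with
    | inl i => rw [Fin.fin_one_eq_zero i]; exact hc
    | inr j =>
      have := hR j
      rw [hc] at this
      exact (mul_eq_zero.mp this.symm).resolve_left hμ
  · left
    have key : μ ^ 2 * v (Sum.inl 0) = ((n : ℝ) - 1) * v (Sum.inl 0) := by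
      have h1 : μ * ∑ j, v (Sum.inr j) = μ ^ 2 * v (Sum.inl 0) := by rw [hL]; ring
      have h2 : μ * ∑ j, v (Sum.inr j) = ∑ j : Fin (n-1), v (Sum.inl 0) := by
        rw [Finset.mul_sum]
        exact Finset.sum_congr rfl fun j _ => (hR j).symm
      rw [h2] at h1
      rw [← h1, Finset.sum_const, Finset.card_univ, Fintype.card_fin, nsmul_eq_mul,
        Nat.cast_sub (by omega : 1 ≤ n)]
      norm_num
    exact mul_right_cancel₀ hc key

lemma StarAux.spectralRadius_eq (n : ℕ) (hn : 2 ≤ n) :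
    (starGraph n).spectralRadius = Real.sqrt ((n : ℝ) - 1) := by
  have hn1 : (1 : ℝ) ≤ (n : ℝ) := by exact_mod_cast Nat.one_le_of_lt hn
  have hnn : (0:ℝ) ≤ (n : ℝ) - 1 := by linarith
  set hA := (starGraph n).isHermitian_adjMatrix' with hAdef
  have hmem : Real.sqrt ((n:ℝ) - 1) ∈ spectrum ℝ ((starGraph n).adjMatrix ℝ) := by
    rw [StarAux.mem_spectrum_iff_exists]
    refine ⟨Sum.elim (fun _ => Real.sqrt ((n:ℝ)-1)) (fun _ => 1), ?_, ?_⟩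
    · intro h
      have := congrFun h (Sum.inr ⟨0, by omega⟩)
      simp at this
    · funext w
      cases w with
      | inl i =>
        rw [StarAux.mulVec_inl]
        simp only [Sum.elim_inr, Sum.elim_inl, Pi.smul_apply, smul_eq_mul,
          Finset.sum_const, Finset.card_univ, Fintype.card_fin, nsmul_eq_mul, mul_one]
        rw [Nat.cast_sub (by omega : 1 ≤ n), Real.mul_self_sqrt hnn]
        norm_num
      | inr j =>
        rw [StarAux.mulVec_inr]
        simp [mul_one]
  rw [StarAux.spectrum_eq_range hA] at hmem
  obtain ⟨i0, hi0⟩ := hmem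
  have hbdd : BddAbove (Set.range hA.eigenvalues) := (Set.finite_range _).bddAbove
  have hub : ∀ i, hA.eigenvalues i ≤ Real.sqrt ((n:ℝ) - 1) := by
    intro i
    have hm := hA.eigenvalues_mem_spectrum_real i
    rw [StarAux.mem_spectrum_iff_exists] at hm
    obtain ⟨v, hv0, hv⟩ := hm
    rcases StarAux.eig_dichotomy n hn _ v hv0 hv with h | h
    · calc hA.eigenvalues i ≤ |hA.eigenvalues i| := le_abs_self _
        _ = Real.sqrt ((n:ℝ)-1) := by rw [← Real.sqrt_sq_eq_abs, h]
    · rw [h]; exact Real.sqrt_nonneg _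
  apply le_antisymm
  · exact ciSup_le hub
  · rw [← hi0]
    exact le_ciSup hbdd i0

lemma StarAux.degDev (n : ℕ) (hn : 2 ≤ n) :
    (starGraph n).degreeDeviation = 2 * ((n:ℝ) - 1) * ((n:ℝ) - 2) / n := by
  have hn2 : (2:ℝ) ≤ (n:ℝ) := by exact_mod_cast hn
  have hnpos : (0:ℝ) < (n:ℝ) := by linarith
  have hc1 : ((n - 1 : ℕ) : ℝ) = (n:ℝ) - 1 := by
    rw [Nat.cast_sub (by omega)]; norm_num
  rw [SimpleGraph.degreeDeviation, Fintype.sum_sum_type]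
  simp only [StarAux.deg_inl, StarAux.deg_inr, StarAux.card_edges, StarAux.card_verts n hn,
    Finset.sum_const, Finset.card_univ, Fintype.card_fin, nsmul_eq_mul, Nat.cast_one, hc1]
  have h1 : (0:ℝ) ≤ (n:ℝ) - 1 - 2 * ((n:ℝ) - 1) / (n:ℝ) := by
    rw [sub_nonneg, div_le_iff₀ hnpos]; nlinarith
  have h2 : (1:ℝ) - 2 * ((n:ℝ) - 1) / (n:ℝ) ≤ 0 := by
    rw [sub_nonpos, le_div_iff₀ hnpos]; nlinarith
  rw [abs_of_nonneg h1, abs_of_nonpos h2]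
  field_simp
  ring

noncomputable def StarAux.gfun (n : ℕ) : ℝ :=
  (1 - 2 * Real.sqrt (1/(n:ℝ) - 1/(n:ℝ)^2)) / (Real.sqrt 2 * Real.sqrt (1 - 2/(n:ℝ)))

lemma StarAux.gfun_tendsto :
    Filter.Tendsto StarAux.gfun Filter.atTop (nhds (Real.sqrt (1/2))) := by
  have h0 : Filter.Tendsto (fun n : ℕ => 1/(n:ℝ)) Filter.atTop (nhds 0) :=
    tendsto_one_div_atTop_nhds_zero_nat
  have h1 : Filter.Tendsto (fun n : ℕ => 1/(n:ℝ) - 1/(n:ℝ)^2) Filter.atTop (nhds 0) := by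
    have h2 : Filter.Tendsto (fun n : ℕ => 1/(n:ℝ)^2) Filter.atTop (nhds 0) := by
      have := h0.mul h0
      simpa [one_div, ← mul_inv, ← sq] using this
    simpa using h0.sub h2
  have hnum : Filter.Tendsto (fun n : ℕ => 1 - 2 * Real.sqrt (1/(n:ℝ) - 1/(n:ℝ)^2))
      Filter.atTop (nhds 1) := by
    have := h1.sqrt
    rw [Real.sqrt_zero] at this
    have := (tendsto_const_nhds (x := (1:ℝ))).sub ((tendsto_const_nhds (x := (2:ℝ))).mul this)
    simpa using this
  have hden : Filter.Tendsto (fun n : ℕ => Real.sqrt 2 * Real.sqrt (1 - 2/(n:ℝ)))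
      Filter.atTop (nhds (Real.sqrt 2)) := by
    have h3 : Filter.Tendsto (fun n : ℕ => 1 - 2/(n:ℝ)) Filter.atTop (nhds 1) := by
      have := (tendsto_const_nhds (x := (1:ℝ))).sub ((tendsto_const_nhds (x := (2:ℝ))).mul h0)
      simpa [div_eq_mul_inv, one_div] using this
    have := (tendsto_const_nhds (x := Real.sqrt 2)).mul h3.sqrt
    simpa using this
  have := hnum.div hden (by positivity)
  have heq : Real.sqrt (1/2) = 1 / Real.sqrt 2 := by
    rw [one_div, one_div, Real.sqrt_inv]
  rwa [← heq] at this

lemma StarAux.gfun_eq (n : ℕ) (hn : 3 ≤ n) :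
    StarAux.gfun n = (Real.sqrt ((n:ℝ) - 1) - 2 * ((n:ℝ) - 1) / (n:ℝ)) /
      Real.sqrt (2 * ((n:ℝ) - 1) * ((n:ℝ) - 2) / (n:ℝ)) := by
  have hx : (3:ℝ) ≤ (n:ℝ) := by exact_mod_cast hn
  have hxpos : (0:ℝ) < (n:ℝ) := by linarith
  have hx1 : (0:ℝ) < (n:ℝ) - 1 := by linarith
  have hx2 : (0:ℝ) ≤ (n:ℝ) - 2 := by linarith
  set x := (n:ℝ)
  have hs1 : Real.sqrt (1/x - 1/x^2) = Real.sqrt (x-1) / x := by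
    rw [show 1/x - 1/x^2 = (x-1)/x^2 by field_simp, Real.sqrt_div hx1.le,
      Real.sqrt_sq hxpos.le]
  have hsne : Real.sqrt (x-1) ≠ 0 := by positivity
  have hnum : Real.sqrt (x-1) - 2*(x-1)/x
      = Real.sqrt (x-1) * (1 - 2 * Real.sqrt (1/x - 1/x^2)) := by
    have key := Real.mul_self_sqrt hx1.le
    rw [hs1]
    field_simp
    linear_combination 2 * key
  have hden : Real.sqrt (2*(x-1)*(x-2)/x)
      = Real.sqrt (x-1) * (Real.sqrt 2 * Real.sqrt (1-2/x)) := by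
    rw [show 2*(x-1)*(x-2)/x = (x-1)*(2*(1-2/x)) by field_simp, Real.sqrt_mul hx1.le,
      Real.sqrt_mul (by norm_num : (0:ℝ) ≤ 2)]
  rw [StarAux.gfun, hnum, hden, mul_div_mul_left _ _ hsne]

/-- The star graph `S_n` has `n - 1` edges and spectral radius `√(n-1)`, and the ratio
`(ρ(S_n) - 2(n-1)/n) / √(s(S_n))` tends to `√(1/2)` as `n → ∞`; hence the constant `1/2`
in the bound `ρ(G) - 2m/n ≤ √(s(G)/2)` is best possible. -/
theorem star_ratio_tendsto_sqrt_half :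
    (∀ n : ℕ, 2 ≤ n →
      (starGraph n).edgeFinset.card = n - 1 ∧
      (starGraph n).spectralRadius = Real.sqrt ((n : ℝ) - 1)) ∧
    Filter.Tendsto
      (fun n : ℕ =>
        ((starGraph n).spectralRadius - 2 * ((n : ℝ) - 1) / (n : ℝ)) /
          Real.sqrt ((starGraph n).degreeDeviation))
      Filter.atTop (nhds (Real.sqrt (1 / 2))) := by
  constructor
  · intro n hn
    exact ⟨StarAux.card_edges n, StarAux.spectralRadius_eq n hn⟩
  · refine Filter.Tendsto.congr' ?_ StarAux.gfun_tendsto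
    filter_upwards [Filter.eventually_ge_atTop 3] with n hn
    rw [StarAux.spectralRadius_eq n (by omega), StarAux.degDev n (by omega)]
    exact StarAux.gfun_eq n hn
end
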